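/- For every n ≥ 4, the graph K_n^+ satisfies σ×_V(K_n^+) = 2 and σ×_E(K_n^+) = 1. -/

import Mathlib

open SimpleGraph

/-- An `l`-track on `G`: a surjective function whose consecutive values are adjacent. -/
def IsTrack {V : Type*} (G : SimpleGraph V) {l : ℕ} (f : Fin l → V) : Prop :=
  Function.Surjective f ∧
    ∀ i : ℕ, ∀ hi : i + 1 < l, G.Adj (f ⟨i, Nat.lt_of_succ_lt hi⟩) (f ⟨i + 1, hi⟩)

/-- A lazy `l`-track on `G`: consecutive values are adjacent or equal. -/
def IsLazyTrack {V : Type*} (G : SimpleGraph V) {l : ℕ} (f : Fin l → V) : Prop :=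
  Function.Surjective f ∧
    ∀ i : ℕ, ∀ hi : i + 1 < l,
      G.Adj (f ⟨i, Nat.lt_of_succ_lt hi⟩) (f ⟨i + 1, hi⟩) ∨
        f ⟨i, Nat.lt_of_succ_lt hi⟩ = f ⟨i + 1, hi⟩

/-- The condition that every edge of `G` is traversed by `f`. -/
def SweepCond {V : Type*} (G : SimpleGraph V) {l : ℕ} (f : Fin l → V) : Prop :=
  ∀ e ∈ G.edgeSet, ∃ i : ℕ, ∃ hi : i + 1 < l,
    e = s(f ⟨i, Nat.lt_of_succ_lt hi⟩, f ⟨i + 1, hi⟩)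

/-- An `l`-sweep on `G`: an `l`-track traversing every edge. -/
def IsSweep {V : Type*} (G : SimpleGraph V) {l : ℕ} (f : Fin l → V) : Prop :=
  IsTrack G f ∧ SweepCond G f

/-- A lazy `l`-sweep on `G`: a lazy `l`-track traversing every edge. -/
def IsLazySweep {V : Type*} (G : SimpleGraph V) {l : ℕ} (f : Fin l → V) : Prop :=
  IsLazyTrack G f ∧ SweepCond G f

/-- `f` and `g` are opposite: at each step exactly `f` moves iff `g` stays. -/
def IsOpposite {V : Type*} (G : SimpleGraph V) {l : ℕ} (f g : Fin l → V) : Prop :=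
  ∀ i : ℕ, ∀ hi : i + 1 < l,
    (G.Adj (f ⟨i, Nat.lt_of_succ_lt hi⟩) (f ⟨i + 1, hi⟩) ↔
      g ⟨i, Nat.lt_of_succ_lt hi⟩ = g ⟨i + 1, hi⟩)

/-- The distance `m_G(f,g)`: minimal distance between simultaneous positions. -/
noncomputable def mDist {V : Type*} (G : SimpleGraph V) {l : ℕ} (f g : Fin l → V) : ℕ :=
  sInf {d | ∃ i : Fin l, G.dist (f i) (g i) = d}

/-- Strong vertex span `σ⊠_V(G)`. -/
noncomputable def strongVertexSpan {V : Type*} (G : SimpleGraph V) : ℕ :=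
  sSup {d | ∃ (l : ℕ) (f g : Fin l → V), IsLazyTrack G f ∧ IsLazyTrack G g ∧ mDist G f g = d}

/-- Direct vertex span `σ×_V(G)`. -/
noncomputable def directVertexSpan {V : Type*} (G : SimpleGraph V) : ℕ :=
  sSup {d | ∃ (l : ℕ) (f g : Fin l → V), IsTrack G f ∧ IsTrack G g ∧ mDist G f g = d}

/-- Cartesian vertex span `σ□_V(G)`. -/
noncomputable def cartesianVertexSpan {V : Type*} (G : SimpleGraph V) : ℕ :=
  sSup {d | ∃ (l : ℕ) (f g : Fin l → V),
    IsLazyTrack G f ∧ IsLazyTrack G g ∧ IsOpposite G f g ∧ mDist G f g = d}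

/-- Strong edge span `σ⊠_E(G)`. -/
noncomputable def strongEdgeSpan {V : Type*} (G : SimpleGraph V) : ℕ :=
  sSup {d | ∃ (l : ℕ) (f g : Fin l → V), IsLazySweep G f ∧ IsLazySweep G g ∧ mDist G f g = d}

/-- Direct edge span `σ×_E(G)`. -/
noncomputable def directEdgeSpan {V : Type*} (G : SimpleGraph V) : ℕ :=
  sSup {d | ∃ (l : ℕ) (f g : Fin l → V), IsSweep G f ∧ IsSweep G g ∧ mDist G f g = d}

/-- Cartesian edge span `σ□_E(G)`. -/
noncomputable def cartesianEdgeSpan {V : Type*} (G : SimpleGraph V) : ℕ :=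
  sSup {d | ∃ (l : ℕ) (f g : Fin l → V),
    IsLazySweep G f ∧ IsLazySweep G g ∧ IsOpposite G f g ∧ mDist G f g = d}

/-- `L⊠_V(G)`: minimal length of lazy tracks realizing the strong vertex span. -/
noncomputable def strongVertexL {V : Type*} (G : SimpleGraph V) : ℕ :=
  sInf {l | ∃ f g : Fin l → V,
    IsLazyTrack G f ∧ IsLazyTrack G g ∧ mDist G f g = strongVertexSpan G}

/-- `L×_V(G)`. -/
noncomputable def directVertexL {V : Type*} (G : SimpleGraph V) : ℕ :=
  sInf {l | ∃ f g : Fin l → V,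
    IsTrack G f ∧ IsTrack G g ∧ mDist G f g = directVertexSpan G}

/-- `L□_V(G)`. -/
noncomputable def cartesianVertexL {V : Type*} (G : SimpleGraph V) : ℕ :=
  sInf {l | ∃ f g : Fin l → V,
    IsLazyTrack G f ∧ IsLazyTrack G g ∧ IsOpposite G f g ∧ mDist G f g = cartesianVertexSpan G}

/-- `L⊠_E(G)`. -/
noncomputable def strongEdgeL {V : Type*} (G : SimpleGraph V) : ℕ :=
  sInf {l | ∃ f g : Fin l → V,
    IsLazySweep G f ∧ IsLazySweep G g ∧ mDist G f g = strongEdgeSpan G}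

/-- `L×_E(G)`. -/
noncomputable def directEdgeL {V : Type*} (G : SimpleGraph V) : ℕ :=
  sInf {l | ∃ f g : Fin l → V,
    IsSweep G f ∧ IsSweep G g ∧ mDist G f g = directEdgeSpan G}

/-- `L□_E(G)`. -/
noncomputable def cartesianEdgeL {V : Type*} (G : SimpleGraph V) : ℕ :=
  sInf {l | ∃ f g : Fin l → V,
    IsLazySweep G f ∧ IsLazySweep G g ∧ IsOpposite G f g ∧ mDist G f g = cartesianEdgeSpan G}

/-- `K_n^+`: the complete graph `K_n` (on `Fin n`, with `v_1 = 0` and `v_n = n-1`)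
with the edge `v_1 v_n` subdivided through the new vertex `w = Sum.inr ()`. -/
def KnPlus (n : ℕ) : SimpleGraph (Fin n ⊕ Unit) :=
  SimpleGraph.fromRel (fun a b =>
    match a, b with
    | Sum.inl i, Sum.inl j =>
        ¬((i.val = 0 ∧ j.val = n - 1) ∨ (i.val = n - 1 ∧ j.val = 0))
    | Sum.inl i, Sum.inr _ => i.val = 0 ∨ i.val = n - 1
    | Sum.inr _, _ => False)

lemma adj_inl_inl {n : ℕ} {i j : Fin n} :
    (KnPlus n).Adj (Sum.inl i) (Sum.inl j) ↔
      i ≠ j ∧ ¬((i.val = 0 ∧ j.val = n-1) ∨ (i.val = n-1 ∧ j.val = 0)) := by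
  unfold KnPlus
  rw [SimpleGraph.fromRel_adj]
  simp only [ne_eq, Sum.inl.injEq]
  tauto

lemma adj_inl_inr {n : ℕ} {i : Fin n} {u : Unit} :
    (KnPlus n).Adj (Sum.inl i) (Sum.inr u) ↔ (i.val = 0 ∨ i.val = n-1) := by
  unfold KnPlus
  rw [SimpleGraph.fromRel_adj]
  simp only [ne_eq, reduceCtorEq, not_false_eq_true, true_and]
  tauto

lemma adj_inr_inl {n : ℕ} {i : Fin n} {u : Unit} :
    (KnPlus n).Adj (Sum.inr u) (Sum.inl i) ↔ (i.val = 0 ∨ i.val = n-1) := by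
  rw [SimpleGraph.adj_comm]; exact adj_inl_inr

lemma not_adj_inr_inr {n : ℕ} {u v : Unit} : ¬ (KnPlus n).Adj (Sum.inr u) (Sum.inr v) := by
  unfold KnPlus
  rw [SimpleGraph.fromRel_adj]
  tauto


lemma dist_eq_two_of {n : ℕ} {a b c : Fin n ⊕ Unit} (hne : a ≠ b)
    (hnadj : ¬ (KnPlus n).Adj a b) (hac : (KnPlus n).Adj a c) (hcb : (KnPlus n).Adj c b) :
    (KnPlus n).dist a b = 2 := by
  have hle : (KnPlus n).dist a b ≤ 2 :=
    (SimpleGraph.dist_le (Walk.cons hac (Walk.cons hcb Walk.nil))).trans (by simp)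
  have h0 : (KnPlus n).dist a b ≠ 0 := by
    have hr : (KnPlus n).Reachable a b := ⟨Walk.cons hac (Walk.cons hcb Walk.nil)⟩
    exact Nat.pos_iff_ne_zero.mp (hr.pos_dist_of_ne hne)
  have h1 : (KnPlus n).dist a b ≠ 1 := fun h => hnadj (SimpleGraph.dist_eq_one_iff_adj.mp h)
  omega

lemma dist_le_two {n : ℕ} (hn : 4 ≤ n) (a b : Fin n ⊕ Unit) : (KnPlus n).dist a b ≤ 2 := by
  by_cases he : a = b
  · subst he; simp [SimpleGraph.dist_self]
  by_cases ha : (KnPlus n).Adj a b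
  · have := SimpleGraph.dist_eq_one_iff_adj.mpr ha; omega
  have key : ∃ c, (KnPlus n).Adj a c ∧ (KnPlus n).Adj c b := by
    match a, b with
    | Sum.inl i, Sum.inl j =>
      rw [adj_inl_inl] at ha
      push_neg at ha
      have hij : i ≠ j := fun h => he (by rw [h])
      have hv := ha hij
      have hij' : i.val ≠ j.val := fun h => hij (Fin.ext h)
      refine ⟨Sum.inl ⟨1, by omega⟩, adj_inl_inl.mpr ?_, adj_inl_inl.mpr ?_⟩ <;>
        simp only [ne_eq, Fin.ext_iff, Fin.val_mk] <;> omega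
    | Sum.inl i, Sum.inr v =>
      rw [adj_inl_inr] at ha
      push_neg at ha
      refine ⟨Sum.inl ⟨0, by omega⟩, adj_inl_inl.mpr ?_, adj_inl_inr.mpr (by simp)⟩
      simp only [ne_eq, Fin.ext_iff, Fin.val_mk]
      omega
    | Sum.inr u, Sum.inl j =>
      rw [adj_inr_inl] at ha
      push_neg at ha
      refine ⟨Sum.inl ⟨0, by omega⟩, adj_inr_inl.mpr (by simp), adj_inl_inl.mpr ?_⟩
      simp only [ne_eq, Fin.ext_iff, Fin.val_mk]
      omega
    | Sum.inr u, Sum.inr v => exact absurd rfl he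
  obtain ⟨c, h1, h2⟩ := key
  exact (dist_eq_two_of he ha h1 h2).le

lemma dist_zero_last {n : ℕ} (hn : 4 ≤ n) :
    (KnPlus n).dist (Sum.inl ⟨0, by omega⟩) (Sum.inl ⟨n-1, by omega⟩) = 2 := by
  refine dist_eq_two_of ?_ ?_ (c := Sum.inl ⟨1, by omega⟩) (adj_inl_inl.mpr ?_) (adj_inl_inl.mpr ?_)
  · simp only [ne_eq, Sum.inl.injEq, Fin.ext_iff, Fin.val_mk]; omega
  · rw [adj_inl_inl]
    simp only [ne_eq, Fin.ext_iff, Fin.val_mk]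
    tauto
  · simp only [ne_eq, Fin.ext_iff, Fin.val_mk]; omega
  · simp only [ne_eq, Fin.ext_iff, Fin.val_mk]; omega

lemma dist_w_mid {n : ℕ} (hn : 4 ≤ n) {m : Fin n} (h0 : m.val ≠ 0) (h1 : m.val ≠ n-1) :
    (KnPlus n).dist (Sum.inr ()) (Sum.inl m) = 2 := by
  refine dist_eq_two_of (by simp) ?_ (c := Sum.inl ⟨0, by omega⟩) (adj_inr_inl.mpr (by simp)) (adj_inl_inl.mpr ?_)
  · rw [adj_inr_inl]; omega
  · simp only [ne_eq, Fin.ext_iff, Fin.val_mk]; omega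

lemma eq_w_of_two_le_dist {n : ℕ} (hn : 4 ≤ n) {m : Fin n} (h0 : m.val ≠ 0) (h1 : m.val ≠ n-1)
    {x : Fin n ⊕ Unit} (h : 2 ≤ (KnPlus n).dist (Sum.inl m) x) : x = Sum.inr () := by
  match x with
  | Sum.inr () => rfl
  | Sum.inl j =>
    exfalso
    by_cases hmj : m = j
    · subst hmj; rw [SimpleGraph.dist_self] at h; omega
    · have : (KnPlus n).Adj (Sum.inl m) (Sum.inl j) := by
        rw [adj_inl_inl]
        exact ⟨hmj, by omega⟩
      rw [SimpleGraph.dist_eq_one_iff_adj.mpr this] at h; omega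


def tF (n : ℕ) (h : 4 ≤ n) (k : ℕ) : Fin n ⊕ Unit :=
  if k % 4 = 0 then .inl ⟨0, by omega⟩
  else if k % 4 = 1 then .inr ()
  else if k % 4 = 2 then .inl ⟨n - 1, by omega⟩
  else .inl ⟨min (1 + k / 4) (n - 1), by omega⟩

def tG (n : ℕ) (h : 4 ≤ n) (k : ℕ) : Fin n ⊕ Unit :=
  if k % 4 = 0 then .inl ⟨n - 1, by omega⟩
  else if k % 4 = 1 then .inl ⟨min (1 + k / 4) (n - 1), by omega⟩
  else if k % 4 = 2 then .inl ⟨0, by omega⟩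
  else .inr ()

variable {n : ℕ} (hn : 4 ≤ n)

lemma tF_eval0 {k : ℕ} (hk : k % 4 = 0) : tF n hn k = Sum.inl ⟨0, by omega⟩ := by
  unfold tF; rw [if_pos hk]
lemma tF_eval1 {k : ℕ} (hk : k % 4 = 1) : tF n hn k = Sum.inr () := by
  unfold tF; rw [if_neg (by omega), if_pos hk]
lemma tF_eval2 {k : ℕ} (hk : k % 4 = 2) : tF n hn k = Sum.inl ⟨n - 1, by omega⟩ := by
  unfold tF; rw [if_neg (by omega), if_neg (by omega), if_pos hk]
lemma tF_eval3 {k : ℕ} (hk : k % 4 = 3) :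
    tF n hn k = Sum.inl ⟨min (1 + k / 4) (n - 1), by omega⟩ := by
  unfold tF; rw [if_neg (by omega), if_neg (by omega), if_neg (by omega)]

lemma tG_eval0 {k : ℕ} (hk : k % 4 = 0) : tG n hn k = Sum.inl ⟨n - 1, by omega⟩ := by
  unfold tG; rw [if_pos hk]
lemma tG_eval1 {k : ℕ} (hk : k % 4 = 1) :
    tG n hn k = Sum.inl ⟨min (1 + k / 4) (n - 1), by omega⟩ := by
  unfold tG; rw [if_neg (by omega), if_pos hk]
lemma tG_eval2 {k : ℕ} (hk : k % 4 = 2) : tG n hn k = Sum.inl ⟨0, by omega⟩ := by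
  unfold tG; rw [if_neg (by omega), if_neg (by omega), if_pos hk]
lemma tG_eval3 {k : ℕ} (hk : k % 4 = 3) : tG n hn k = Sum.inr () := by
  unfold tG; rw [if_neg (by omega), if_neg (by omega), if_neg (by omega)]

lemma mid_adj_aux {a b : ℕ} (ha : a < n) (hb : b < n) (hne : a ≠ b)
    (hx : ¬(a = 0 ∧ b = n-1)) (hy : ¬(a = n-1 ∧ b = 0)) :
    (KnPlus n).Adj (Sum.inl ⟨a, ha⟩) (Sum.inl ⟨b, hb⟩) := by
  rw [adj_inl_inl]
  refine ⟨fun h => hne ?_, by simp only [Fin.val_mk]; tauto⟩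
  simpa [Fin.ext_iff] using h

lemma tF_track : IsTrack (KnPlus n) (fun k : Fin (4*(n-2)+1) => tF n hn k.val) := by
  constructor
  · rintro (j | u)
    · rcases Nat.lt_or_ge j.val 1 with hj | hj
      · refine ⟨⟨0, by omega⟩, ?_⟩
        show tF n hn 0 = _
        rw [tF_eval0 hn (by omega)]
        simp only [Sum.inl.injEq, Fin.ext_iff, Fin.val_mk]; omega
      · rcases Nat.lt_or_ge j.val (n-1) with hj2 | hj2
        · refine ⟨⟨4*(j.val-1)+3, by omega⟩, ?_⟩
          show tF n hn (4*(j.val-1)+3) = _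
          rw [tF_eval3 hn (by omega)]
          simp only [Sum.inl.injEq, Fin.ext_iff, Fin.val_mk]
          omega
        · refine ⟨⟨2, by omega⟩, ?_⟩
          show tF n hn 2 = _
          rw [tF_eval2 hn (by omega)]
          have := j.isLt
          simp only [Sum.inl.injEq, Fin.ext_iff, Fin.val_mk]; omega
    · exact ⟨⟨1, by omega⟩, by show tF n hn 1 = _; rw [tF_eval1 hn (by omega)]⟩
  · intro i hi
    show (KnPlus n).Adj (tF n hn i) (tF n hn (i+1))
    have h4 : i % 4 = 0 ∨ i % 4 = 1 ∨ i % 4 = 2 ∨ i % 4 = 3 := by omega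
    rcases h4 with h | h | h | h
    · rw [tF_eval0 hn h, tF_eval1 hn (by omega), adj_inl_inr]
      left; rfl
    · rw [tF_eval1 hn h, tF_eval2 hn (by omega), adj_inr_inl]
      right; rfl
    · rw [tF_eval2 hn h, tF_eval3 hn (by omega)]
      have hb : (i+1)/4 ≤ n - 3 := by omega
      exact mid_adj_aux _ _ (by omega) (by omega) (by omega)
    · rw [tF_eval3 hn h, tF_eval0 hn (by omega)]
      have hb : i/4 ≤ n - 3 := by omega
      exact mid_adj_aux _ _ (by omega) (by omega) (by omega)

lemma tG_track : IsTrack (KnPlus n) (fun k : Fin (4*(n-2)+1) => tG n hn k.val) := by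
  constructor
  · rintro (j | u)
    · rcases Nat.lt_or_ge j.val 1 with hj | hj
      · refine ⟨⟨2, by omega⟩, ?_⟩
        show tG n hn 2 = _
        rw [tG_eval2 hn (by omega)]
        simp only [Sum.inl.injEq, Fin.ext_iff, Fin.val_mk]; omega
      · rcases Nat.lt_or_ge j.val (n-1) with hj2 | hj2
        · refine ⟨⟨4*(j.val-1)+1, by omega⟩, ?_⟩
          show tG n hn (4*(j.val-1)+1) = _
          rw [tG_eval1 hn (by omega)]
          simp only [Sum.inl.injEq, Fin.ext_iff, Fin.val_mk]
          omega
        · refine ⟨⟨0, by omega⟩, ?_⟩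
          show tG n hn 0 = _
          rw [tG_eval0 hn (by omega)]
          have := j.isLt
          simp only [Sum.inl.injEq, Fin.ext_iff, Fin.val_mk]; omega
    · exact ⟨⟨3, by omega⟩, by show tG n hn 3 = _; rw [tG_eval3 hn (by omega)]⟩
  · intro i hi
    show (KnPlus n).Adj (tG n hn i) (tG n hn (i+1))
    have h4 : i % 4 = 0 ∨ i % 4 = 1 ∨ i % 4 = 2 ∨ i % 4 = 3 := by omega
    rcases h4 with h | h | h | h
    · rw [tG_eval0 hn h, tG_eval1 hn (by omega)]
      have hb : (i+1)/4 ≤ n - 3 := by omega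
      exact mid_adj_aux _ _ (by omega) (by omega) (by omega)
    · rw [tG_eval1 hn h, tG_eval2 hn (by omega)]
      have hb : i/4 ≤ n - 3 := by omega
      exact mid_adj_aux _ _ (by omega) (by omega) (by omega)
    · rw [tG_eval2 hn h, tG_eval3 hn (by omega), adj_inl_inr]
      left; rfl
    · rw [tG_eval3 hn h, tG_eval0 hn (by omega), adj_inr_inl]
      right; rfl

lemma tFG_dist (k : ℕ) (hk : k < 4*(n-2)+1) :
    (KnPlus n).dist (tF n hn k) (tG n hn k) = 2 := by
  have h4 : k % 4 = 0 ∨ k % 4 = 1 ∨ k % 4 = 2 ∨ k % 4 = 3 := by omega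
  rcases h4 with h | h | h | h
  · rw [tF_eval0 hn h, tG_eval0 hn h]
    exact dist_zero_last hn
  · rw [tF_eval1 hn h, tG_eval1 hn h]
    have hb : k/4 ≤ n - 3 := by omega
    exact dist_w_mid hn (by simp only [Fin.val_mk]; omega) (by simp only [Fin.val_mk]; omega)
  · rw [tF_eval2 hn h, tG_eval2 hn h, SimpleGraph.dist_comm]
    exact dist_zero_last hn
  · rw [tF_eval3 hn h, tG_eval3 hn h, SimpleGraph.dist_comm]
    have hb : k/4 ≤ n - 3 := by omega
    exact dist_w_mid hn (by simp only [Fin.val_mk]; omega) (by simp only [Fin.val_mk]; omega)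

lemma mdist_tFG :
    mDist (KnPlus n) (fun k : Fin (4*(n-2)+1) => tF n hn k.val)
      (fun k : Fin (4*(n-2)+1) => tG n hn k.val) = 2 := by
  show sInf {d | ∃ i : Fin (4*(n-2)+1), (KnPlus n).dist (tF n hn i.val) (tG n hn i.val) = d} = 2
  have hset : {d | ∃ i : Fin (4*(n-2)+1), (KnPlus n).dist (tF n hn i.val) (tG n hn i.val) = d}
      = {2} := by
    ext d
    simp only [Set.mem_setOf_eq, Set.mem_singleton_iff]
    constructor
    · rintro ⟨i, rfl⟩; exact tFG_dist hn i.val i.isLt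
    · rintro rfl; exact ⟨⟨0, by omega⟩, tFG_dist hn 0 (by omega)⟩
  rw [hset]
  exact csInf_singleton 2

include hn in
lemma dvs : directVertexSpan (KnPlus n) = 2 := by
  have hub : ∀ d ∈ {d | ∃ (l : ℕ) (f g : Fin l → Fin n ⊕ Unit),
      IsTrack (KnPlus n) f ∧ IsTrack (KnPlus n) g ∧ mDist (KnPlus n) f g = d}, d ≤ 2 := by
    rintro d ⟨l, f, g, hf, hg, rfl⟩
    obtain ⟨i, -⟩ := hf.1 (Sum.inr ())
    exact le_trans (Nat.sInf_le ⟨i, rfl⟩) (dist_le_two hn (f i) (g i))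
  have hmem : 2 ∈ {d | ∃ (l : ℕ) (f g : Fin l → Fin n ⊕ Unit),
      IsTrack (KnPlus n) f ∧ IsTrack (KnPlus n) g ∧ mDist (KnPlus n) f g = d} :=
    ⟨4*(n-2)+1, _, _, tF_track hn, tG_track hn, mdist_tFG hn⟩
  exact le_antisymm (csSup_le ⟨2, hmem⟩ hub) (le_csSup ⟨2, hub⟩ hmem)

include hn in
lemma edge_ub {l : ℕ} {f g : Fin l → Fin n ⊕ Unit} (hf : IsSweep (KnPlus n) f)
    (hg : IsSweep (KnPlus n) g) : mDist (KnPlus n) f g ≤ 1 := by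
  by_contra hcon
  push_neg at hcon
  have hall : ∀ i : Fin l, 2 ≤ (KnPlus n).dist (f i) (g i) := fun i =>
    le_trans hcon (Nat.sInf_le ⟨i, rfl⟩)
  have hedge : s(Sum.inl ⟨1, by omega⟩, Sum.inl ⟨2, by omega⟩) ∈ (KnPlus n).edgeSet := by
    rw [SimpleGraph.mem_edgeSet]
    exact mid_adj_aux _ _ (by omega) (by omega) (by omega)
  obtain ⟨i, hi, he⟩ := hf.2 _ hedge
  have key : ∀ (m : Fin n), m.val ≠ 0 → m.val ≠ n-1 → ∀ (x : Fin l),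
      f x = Sum.inl m → g x = Sum.inr () := fun m h0 h1 x hx =>
    eq_w_of_two_le_dist hn h0 h1 (hx ▸ hall x)
  have hg1 : g ⟨i, Nat.lt_of_succ_lt hi⟩ = Sum.inr () := by
    rw [Sym2.eq_iff] at he
    rcases he with ⟨h1, h2⟩ | ⟨h1, h2⟩
    · exact key _ (by simp) (by simp only [Fin.val_mk]; omega) _ h1.symm
    · exact key _ (by simp) (by simp only [Fin.val_mk]; omega) _ h2.symm
  have hg2 : g ⟨i+1, hi⟩ = Sum.inr () := by
    rw [Sym2.eq_iff] at he
    rcases he with ⟨h1, h2⟩ | ⟨h1, h2⟩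
    · exact key _ (by simp) (by simp only [Fin.val_mk]; omega) _ h2.symm
    · exact key _ (by simp) (by simp only [Fin.val_mk]; omega) _ h1.symm
  have := hg.1.2 i hi
  rw [hg1, hg2] at this
  exact not_adj_inr_inr this

def walkTo (a : Fin n ⊕ Unit) :
    (KnPlus n).Walk (Sum.inl ⟨1, by omega⟩) a := by
  match a with
  | Sum.inr () =>
    exact Walk.cons (mid_adj_aux (b := 0) (by omega) (by omega) (by omega) (by omega) (by omega))
      (Walk.cons (adj_inl_inr.mpr (Or.inl rfl)) Walk.nil)
  | Sum.inl j =>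
    by_cases h : j.val = 1
    · have hj : j = ⟨1, by omega⟩ := Fin.ext h
      rw [hj]
    · have hj : j.val ≠ 1 := h
      exact Walk.cons (mid_adj_aux (b := j.val) (by omega) j.isLt (by omega) (by omega)
        (by omega)) Walk.nil

instance (n : ℕ) : DecidableRel (KnPlus n).Adj := fun a b =>
  match a, b with
  | Sum.inl _, Sum.inl _ => decidable_of_iff _ adj_inl_inl.symm
  | Sum.inl _, Sum.inr _ => decidable_of_iff _ adj_inl_inr.symm
  | Sum.inr _, Sum.inl _ => decidable_of_iff _ adj_inr_inl.symm
  | Sum.inr _, Sum.inr _ => isFalse not_adj_inr_inr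

def segKn (p : (Fin n ⊕ Unit) × (Fin n ⊕ Unit)) :
    (KnPlus n).Walk (Sum.inl ⟨1, by omega⟩) (Sum.inl ⟨1, by omega⟩) :=
  if h : (KnPlus n).Adj p.1 p.2 then
    (walkTo hn p.1).append (Walk.cons h (walkTo hn p.2).reverse)
  else Walk.nil

lemma segKn_edge {p : (Fin n ⊕ Unit) × (Fin n ⊕ Unit)} (h : (KnPlus n).Adj p.1 p.2) :
    s(p.1, p.2) ∈ (segKn hn p).edges := by
  unfold segKn
  rw [dif_pos h]
  simp [Walk.edges_append, Walk.edges_cons]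

def LKn : List ((Fin n ⊕ Unit) × (Fin n ⊕ Unit)) :=
  (((List.finRange n).product (List.finRange n)).map (fun q => (Sum.inl q.1, Sum.inl q.2))) ++
  [(Sum.inr (), Sum.inl ⟨0, by omega⟩), (Sum.inr (), Sum.inl ⟨n-1, by omega⟩)]

def bigWalk :
    (KnPlus n).Walk (Sum.inl ⟨1, by omega⟩) (Sum.inl ⟨1, by omega⟩) :=
  (LKn hn).foldr (fun p acc => (segKn hn p).append acc) Walk.nil

lemma bigWalk_edge {p : (Fin n ⊕ Unit) × (Fin n ⊕ Unit)} (hp : p ∈ LKn hn)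
    (h : (KnPlus n).Adj p.1 p.2) : s(p.1, p.2) ∈ (bigWalk hn).edges := by
  unfold bigWalk
  have key : ∀ (M : List ((Fin n ⊕ Unit) × (Fin n ⊕ Unit))), p ∈ M →
      s(p.1, p.2) ∈ (M.foldr (fun q acc => (segKn hn q).append acc) Walk.nil).edges := by
    intro M hM
    induction M with
    | nil => simp at hM
    | cons q M ih =>
      simp only [List.foldr_cons, Walk.edges_append, List.mem_append]
      rcases List.mem_cons.mp hM with rfl | hM'
      · left; exact segKn_edge hn h
      · right; exact ih hM'
  exact key _ hp

lemma bigWalk_covers : ∀ e ∈ (KnPlus n).edgeSet, e ∈ (bigWalk hn).edges := by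
  intro e he
  induction e with
  | _ a b =>
    rw [SimpleGraph.mem_edgeSet] at he
    match a, b with
    | Sum.inl i, Sum.inl j =>
      refine bigWalk_edge hn (p := (Sum.inl i, Sum.inl j)) ?_ he
      unfold LKn
      refine List.mem_append.mpr (Or.inl ?_)
      exact List.mem_map.mpr ⟨(i, j), List.pair_mem_product.mpr ⟨List.mem_finRange i,
        List.mem_finRange j⟩, rfl⟩
    | Sum.inl i, Sum.inr () =>
      rw [adj_inl_inr] at he
      rw [Sym2.eq_swap]
      rcases he with h0 | h1
      · have : i = ⟨0, by omega⟩ := Fin.ext h0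
        rw [this]
        refine bigWalk_edge hn (p := (Sum.inr (), Sum.inl ⟨0, by omega⟩)) ?_ (adj_inr_inl.mpr (Or.inl rfl))
        unfold LKn
        simp
      · have : i = ⟨n-1, by omega⟩ := Fin.ext h1
        rw [this]
        refine bigWalk_edge hn (p := (Sum.inr (), Sum.inl ⟨n-1, by omega⟩)) ?_ (adj_inr_inl.mpr (Or.inr rfl))
        unfold LKn
        simp
    | Sum.inr (), Sum.inl j =>
      rw [adj_inr_inl] at he
      rcases he with h0 | h1
      · have : j = ⟨0, by omega⟩ := Fin.ext h0
        rw [this]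
        refine bigWalk_edge hn (p := (Sum.inr (), Sum.inl ⟨0, by omega⟩)) ?_ (adj_inr_inl.mpr (Or.inl rfl))
        unfold LKn
        simp
      · have : j = ⟨n-1, by omega⟩ := Fin.ext h1
        rw [this]
        refine bigWalk_edge hn (p := (Sum.inr (), Sum.inl ⟨n-1, by omega⟩)) ?_ (adj_inr_inl.mpr (Or.inr rfl))
        unfold LKn
        simp
    | Sum.inr (), Sum.inr () => exact absurd he not_adj_inr_inr

lemma mem_edges_getVert {V : Type*} {G : SimpleGraph V} {u v : V} (p : G.Walk u v) {e : Sym2 V}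
    (he : e ∈ p.edges) : ∃ i < p.length, e = s(p.getVert i, p.getVert (i+1)) := by
  induction p with
  | nil => simp at he
  | @cons u' v' w' h q ih =>
    rw [Walk.edges_cons, List.mem_cons] at he
    rcases he with rfl | he'
    · exact ⟨0, by simp, by rw [Walk.getVert_zero, Walk.getVert_cons_succ, Walk.getVert_zero]⟩
    · obtain ⟨i, hi, hei⟩ := ih he'
      exact ⟨i+1, by simp only [Walk.length_cons]; omega,
        by rwa [Walk.getVert_cons_succ, Walk.getVert_cons_succ]⟩

include hn in
lemma bigWalk_length_pos : 1 ≤ (bigWalk hn).length := by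
  have hedge : s((Sum.inl ⟨1, by omega⟩ : Fin n ⊕ Unit), Sum.inl ⟨0, by omega⟩) ∈
      (KnPlus n).edgeSet := by
    rw [SimpleGraph.mem_edgeSet]
    exact mid_adj_aux _ _ (by omega) (by omega) (by omega)
  obtain ⟨i, hi, -⟩ := mem_edges_getVert _ (bigWalk_covers hn _ hedge)
  omega

include hn in
lemma bigWalk_support : ∀ v : Fin n ⊕ Unit, v ∈ (bigWalk hn).support := by
  rintro (i | u)
  · by_cases h : i = ⟨1, by omega⟩
    · subst h; exact Walk.start_mem_support _
    · have hj : i.val ≠ 1 := fun hh => h (Fin.ext hh)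
      have hedge : s((Sum.inl i : Fin n ⊕ Unit), Sum.inl ⟨1, by omega⟩) ∈
          (KnPlus n).edgeSet := by
        rw [SimpleGraph.mem_edgeSet]
        exact mid_adj_aux i.isLt (by omega) (by omega) (by omega) (by omega)
      exact Walk.fst_mem_support_of_mem_edges _ (bigWalk_covers hn _ hedge)
  · have hedge : s((Sum.inr u : Fin n ⊕ Unit), Sum.inl ⟨0, by omega⟩) ∈
        (KnPlus n).edgeSet := by
      rw [SimpleGraph.mem_edgeSet, adj_inr_inl]
      exact Or.inl rfl
    exact Walk.fst_mem_support_of_mem_edges _ (bigWalk_covers hn _ hedge)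

def fW : Fin ((bigWalk hn).length + 1) → Fin n ⊕ Unit := fun k => (bigWalk hn).getVert k.val

def gW : Fin ((bigWalk hn).length + 1) → Fin n ⊕ Unit := fun k =>
  if k.val = (bigWalk hn).length then (bigWalk hn).getVert 1
  else (bigWalk hn).getVert (k.val + 1)

lemma gW_eval_ne (k : Fin ((bigWalk hn).length + 1)) (h : k.val ≠ (bigWalk hn).length) :
    gW hn k = (bigWalk hn).getVert (k.val + 1) := if_neg h

lemma gW_eval_eq (k : Fin ((bigWalk hn).length + 1)) (h : k.val = (bigWalk hn).length) :
    gW hn k = (bigWalk hn).getVert 1 := if_pos h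

lemma hclosed : (bigWalk hn).getVert (bigWalk hn).length = (bigWalk hn).getVert 0 := by
  rw [Walk.getVert_length, Walk.getVert_zero]

lemma fW_sweep : IsSweep (KnPlus n) (fW hn) := by
  refine ⟨⟨?_, ?_⟩, ?_⟩
  · intro v
    obtain ⟨i, hgv, hle⟩ := Walk.mem_support_iff_exists_getVert.mp (bigWalk_support hn v)
    exact ⟨⟨i, by omega⟩, hgv⟩
  · intro i hi
    show (KnPlus n).Adj ((bigWalk hn).getVert i) ((bigWalk hn).getVert (i+1))
    exact Walk.adj_getVert_succ _ (by omega)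
  · intro e he
    obtain ⟨i, hi, hei⟩ := mem_edges_getVert _ (bigWalk_covers hn e he)
    exact ⟨i, by omega, hei⟩

lemma gW_sweep : IsSweep (KnPlus n) (gW hn) := by
  have hpos := bigWalk_length_pos hn
  refine ⟨⟨?_, ?_⟩, ?_⟩
  · intro v
    obtain ⟨j, hgv, hle⟩ := Walk.mem_support_iff_exists_getVert.mp (bigWalk_support hn v)
    rcases Nat.eq_zero_or_pos j with rfl | hj
    · refine ⟨⟨(bigWalk hn).length - 1, by omega⟩, ?_⟩
      rw [gW_eval_ne hn _ (by simp only [Fin.val_mk]; omega)]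
      simp only [Fin.val_mk]
      rw [show (bigWalk hn).length - 1 + 1 = (bigWalk hn).length by omega, hclosed]
      exact hgv
    · refine ⟨⟨j - 1, by omega⟩, ?_⟩
      rw [gW_eval_ne hn _ (by simp only [Fin.val_mk]; omega)]
      simp only [Fin.val_mk]
      rw [show j - 1 + 1 = j by omega]
      exact hgv
  · intro i hi
    rw [gW_eval_ne hn _ (by simp only [Fin.val_mk]; omega)]
    simp only [Fin.val_mk]
    by_cases hil : i + 1 = (bigWalk hn).length
    · rw [gW_eval_eq hn _ (by simp only [Fin.val_mk]; omega), hil, hclosed]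
      exact Walk.adj_getVert_succ _ (by omega)
    · rw [gW_eval_ne hn _ (by simp only [Fin.val_mk]; omega)]
      simp only [Fin.val_mk]
      exact Walk.adj_getVert_succ _ (by omega)
  · intro e he
    obtain ⟨i, hi, hei⟩ := mem_edges_getVert _ (bigWalk_covers hn e he)
    rcases Nat.eq_zero_or_pos i with rfl | hipos
    · refine ⟨(bigWalk hn).length - 1, by omega, ?_⟩
      rw [gW_eval_ne hn _ (by simp only [Fin.val_mk]; omega),
        gW_eval_eq hn _ (by simp only [Fin.val_mk]; omega)]
      simp only [Fin.val_mk]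
      rw [show (bigWalk hn).length - 1 + 1 = (bigWalk hn).length by omega, hclosed]
      exact hei
    · refine ⟨i - 1, by omega, ?_⟩
      rw [gW_eval_ne hn _ (by simp only [Fin.val_mk]; omega),
        gW_eval_ne hn _ (by simp only [Fin.val_mk]; omega)]
      simp only [Fin.val_mk]
      rw [show i - 1 + 1 = i by omega]
      exact hei

lemma fgW_dist (k : Fin ((bigWalk hn).length + 1)) :
    (KnPlus n).dist (fW hn k) (gW hn k) = 1 := by
  have hpos := bigWalk_length_pos hn
  rw [SimpleGraph.dist_eq_one_iff_adj]
  by_cases h : k.val = (bigWalk hn).length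
  · rw [gW_eval_eq hn k h]
    show (KnPlus n).Adj ((bigWalk hn).getVert k.val) _
    rw [h, hclosed]
    exact Walk.adj_getVert_succ _ (by omega)
  · rw [gW_eval_ne hn k h]
    have := k.isLt
    exact Walk.adj_getVert_succ _ (by omega)

lemma mdist_fgW : mDist (KnPlus n) (fW hn) (gW hn) = 1 := by
  have hpos := bigWalk_length_pos hn
  show sInf {d | ∃ i, (KnPlus n).dist (fW hn i) (gW hn i) = d} = 1
  have hset : {d | ∃ i, (KnPlus n).dist (fW hn i) (gW hn i) = d} = {1} := by
    ext d
    simp only [Set.mem_setOf_eq, Set.mem_singleton_iff]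
    constructor
    · rintro ⟨i, rfl⟩; exact fgW_dist hn i
    · rintro rfl; exact ⟨⟨0, by omega⟩, fgW_dist hn _⟩
  rw [hset]
  exact csInf_singleton 1

include hn in
lemma des : directEdgeSpan (KnPlus n) = 1 := by
  have hub : ∀ d ∈ {d | ∃ (l : ℕ) (f g : Fin l → Fin n ⊕ Unit),
      IsSweep (KnPlus n) f ∧ IsSweep (KnPlus n) g ∧ mDist (KnPlus n) f g = d}, d ≤ 1 := by
    rintro d ⟨l, f, g, hf, hg, rfl⟩
    exact edge_ub hn hf hg
  have hmem : 1 ∈ {d | ∃ (l : ℕ) (f g : Fin l → Fin n ⊕ Unit),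
      IsSweep (KnPlus n) f ∧ IsSweep (KnPlus n) g ∧ mDist (KnPlus n) f g = d} :=
    ⟨(bigWalk hn).length + 1, fW hn, gW hn, fW_sweep hn, gW_sweep hn, mdist_fgW hn⟩
  exact le_antisymm (csSup_le ⟨1, hmem⟩ hub) (le_csSup ⟨1, hub⟩ hmem)


theorem stmt7 (n : ℕ) (hn : 4 ≤ n) :
    directVertexSpan (KnPlus n) = 2 ∧ directEdgeSpan (KnPlus n) = 1 := ⟨dvs hn, des hn⟩
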